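/- Consequence of sharpness: no uniform bound of the form J^{π_R}(x) − V*(x) ≤ C ε can hold over all SSPs with a universal constant C independent of the rollout hitting time. Precisely, for every C ≥ 0 there exist a deterministic SSP, an initial state x, an ε > 0, and a bounded V with V(t) = 0 and ‖V − V*‖∞ ≤ ε, such that the rollout policy π_R built from V is proper from x and J^{π_R}(x) − V*(x) > C ε. -/

import Mathlib

open MeasureTheory ProbabilityTheory Filter
open scoped ENNReal

/-- Deterministic closed-loop trajectory: `x₀ = x`, `x_{k+1} = F(x_k, π(x_k))`. -/
def detTraj {X U : Type*} (F : X → U → X) (π : X → U) (x : X) : ℕ → X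
  | 0 => x
  | k + 1 => F (detTraj F π x k) (π (detTraj F π x k))

/-- Transition map of the counterexample chain. -/
def sspF (N : ℕ) (y : Fin (N + 2)) (u : Bool) : Fin (N + 2) :=
  if h : 0 < y.val ∧ y.val < N + 1 ∧ u = true then ⟨y.val + 1, by omega⟩ else 0

/-- Stage cost of the counterexample chain. -/
def sspf (N : ℕ) (y : Fin (N + 2)) (u : Bool) : ℝ :=
  if 0 < y.val ∧ y.val < N + 1 ∧ u = true then 1 else 0

lemma sspf_nonneg (N : ℕ) (y : Fin (N + 2)) (u : Bool) : 0 ≤ sspf N y u := by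
  unfold sspf; split <;> norm_num

lemma ssp_traj (N : ℕ) : ∀ k (hk : k ≤ N),
    detTraj (sspF N) (fun _ => true) (⟨1, by omega⟩ : Fin (N + 2)) k
      = ⟨k + 1, by omega⟩ := by
  intro k
  induction k with
  | zero => intro _; rfl
  | succ k ih =>
    intro hk
    have hx := ih (by omega)
    show sspF N _ _ = _
    rw [hx]
    unfold sspF
    simp only [Fin.val_mk]
    rw [dif_pos ⟨by omega, by omega, trivial⟩]

/-- No uniform bound `J^{π_R}(x) - V*(x) ≤ C ε` can hold over all SSPs with a universal
constant `C` independent of the rollout hitting time: for every `C ≥ 0` there exist a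
deterministic SSP, an initial state `x`, an `ε > 0`, and a surrogate `V` with `V(t) = 0` and
`‖V - V*‖∞ ≤ ε`, such that the rollout policy `π_R` built from `V` is proper from `x` and
`J^{π_R}(x) - V*(x) > C ε`. -/
theorem no_uniform_rollout_bound (C : ℝ) (hC : 0 ≤ C) :
    ∃ (X U : Type) (_ : Finite X) (_ : Finite U) (t : X) (Ua : X → Set U)
      (F : X → U → X) (f : X → U → ℝ) (Vstar V : X → ℝ) (πR : X → U) (x : X)
      (ε : ℝ) (n : ℕ),
      0 < ε ∧
      (∀ y, (Ua y).Nonempty) ∧ (∀ y u, 0 ≤ f y u) ∧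
      (∀ u, F t u = t) ∧ (∀ u, f t u = 0) ∧
      -- V* : the optimal value, satisfying the deterministic Bellman equation
      Vstar t = 0 ∧
      (∀ y, y ≠ t → Vstar y = ⨅ u : Ua y, (f y (u : U) + Vstar (F y (u : U)))) ∧
      -- the value surrogate V
      V t = 0 ∧ (∀ y, |V y - Vstar y| ≤ ε) ∧
      -- π_R : a rollout (one-step greedy) policy for V
      (∀ y, πR y ∈ Ua y) ∧
      (∀ y, y ≠ t → ∀ u ∈ Ua y, f y (πR y) + V (F y (πR y)) ≤ f y u + V (F y u)) ∧
      -- the closed loop from x is proper with hitting time n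
      detTraj F πR x n = t ∧ (∀ k < n, detTraj F πR x k ≠ t) ∧
      -- suboptimality strictly exceeds C ε
      C * ε
        < (∑ k ∈ Finset.range n,
            f (detTraj F πR x k) (πR (detTraj F πR x k))) - Vstar x := by
  classical
  set N := Nat.floor C + 1 with hNdef
  refine ⟨Fin (N + 2), Bool, inferInstance, inferInstance, 0, fun _ => Set.univ,
    sspF N, sspf N, fun _ => 0, fun y => if y = 0 then 0 else -1, fun _ => true,
    ⟨1, by omega⟩, 1, N + 1, one_pos, fun _ => ⟨true, trivial⟩, sspf_nonneg N,
    ?_, ?_, rfl, ?_, if_pos rfl, ?_, fun _ => trivial, ?_, ?_, ?_, ?_⟩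
  · intro u
    unfold sspF
    rw [dif_neg (by simp)]
  · intro u
    unfold sspf
    rw [if_neg (by simp)]
  · -- Bellman equation
    intro y hy
    refine le_antisymm (le_ciInf fun u => by
      have := sspf_nonneg N y u; simpa using this) ?_
    have hb : BddBelow (Set.range fun u : (Set.univ : Set Bool) =>
        sspf N y (u : Bool) + 0) := by
      refine ⟨0, ?_⟩
      rintro _ ⟨u, rfl⟩
      have := sspf_nonneg N y u; simpa using this
    have h := ciInf_le hb (⟨false, trivial⟩ : (Set.univ : Set Bool))
    have hval : sspf N y false + 0 = 0 := by
      unfold sspf; rw [if_neg (by simp)]; ring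
    rw [hval] at h
    exact h
  · -- |V - Vstar| ≤ ε
    intro y
    by_cases hy : y = 0 <;> simp [hy]
  · -- greedy property
    intro y hy u _
    have hy0 : 0 < y.val := by
      rcases Nat.eq_zero_or_pos y.val with h | h
      · exact absurd (Fin.ext h) hy
      · exact h
    have hL : sspf N y true + (if sspF N y true = 0 then (0:ℝ) else -1) = 0 := by
      by_cases hlt : y.val < N + 1
      · have hF : sspF N y true = ⟨y.val + 1, by omega⟩ := by
          unfold sspF; rw [dif_pos ⟨hy0, hlt, rfl⟩]
        have hf : sspf N y true = 1 := by
          unfold sspf; rw [if_pos ⟨hy0, hlt, rfl⟩]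
        have hne : (⟨y.val + 1, by omega⟩ : Fin (N + 2)) ≠ 0 := by
          intro h; have := congrArg Fin.val h; simp at this
        rw [hF, hf, if_neg hne]
        ring
      · have hF : sspF N y true = 0 := by
          unfold sspF; rw [dif_neg (by tauto)]
        have hf : sspf N y true = 0 := by
          unfold sspf; rw [if_neg (by tauto)]
        rw [hF, hf, if_pos rfl]; ring
    have hR : (0:ℝ) ≤ sspf N y u + (if sspF N y u = 0 then (0:ℝ) else -1) := by
      cases u with
      | false =>
        have hF : sspF N y false = 0 := by
          unfold sspF; rw [dif_neg (by simp)]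
        have hf : sspf N y false = 0 := by
          unfold sspf; rw [if_neg (by simp)]
        rw [hF, hf, if_pos rfl]; norm_num
      | true => rw [hL]
    calc sspf N y true + (if sspF N y true = 0 then (0:ℝ) else -1) = 0 := hL
      _ ≤ _ := hR
  · -- hits t at time N+1
    have hx := ssp_traj N N le_rfl
    show sspF N _ _ = _
    rw [hx]
    unfold sspF
    simp only [Fin.val_mk]
    rw [dif_neg (by rintro ⟨-, h, -⟩; omega)]
  · -- not earlier
    intro k hk
    have hx := ssp_traj N k (by omega)
    rw [hx]
    intro h
    have := congrArg Fin.val h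
    simp at this
  · -- cost gap
    have hsum : (∑ k ∈ Finset.range (N + 1),
        sspf N (detTraj (sspF N) (fun _ => true) (⟨1, by omega⟩ : Fin (N+2)) k)
          ((fun _ => true) (detTraj (sspF N) (fun _ => true) (⟨1, by omega⟩ : Fin (N+2)) k)))
        = (N : ℝ) := by
      rw [Finset.sum_range_succ]
      have hlast : sspf N (detTraj (sspF N) (fun _ => true) (⟨1, by omega⟩ : Fin (N+2)) N) true = 0 := by
        rw [ssp_traj N N le_rfl]
        unfold sspf
        rw [if_neg (by simp)]
      have hterm : ∀ k ∈ Finset.range N,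
          sspf N (detTraj (sspF N) (fun _ => true) (⟨1, by omega⟩ : Fin (N+2)) k) true = 1 := by
        intro k hk
        rw [Finset.mem_range] at hk
        rw [ssp_traj N k (by omega)]
        unfold sspf
        simp only [Fin.val_mk]
        rw [if_pos ⟨by omega, by omega, trivial⟩]
      rw [Finset.sum_congr rfl hterm, hlast]
      simp
    rw [hsum]
    have hCN : C < (N : ℝ) := by
      have := Nat.lt_floor_add_one C
      push_cast [hNdef]
      linarith
    simpa using hCN
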